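/- arXiv:1208.3983 — 2 statements merged into one kernel-verified Lean document; each statement's English description precedes it below -/
import Mathlib

section
/- Let Λ₀ and Λ₁ be ℤ-lattices in the Euclidean plane E = ℝ² (discrete additive subgroups spanning E over ℝ). Let f̃ : E → E be a K-Lipschitz map for which there exists an additive group homomorphism φ : Λ₀ → Λ₁ satisfying f̃(x + λ) = f̃(x) + φ(λ) for all x ∈ E and all λ ∈ Λ₀ (so f̃ descends to a K-Lipschitz map between the flat tori T₀ = E/Λ₀ and T₁ = E/Λ₁). Suppose that the kernel of φ is the infinite cyclic subgroup ℤ·a generated by some nonzero a ∈ Λ₀, and set L = ‖a‖. Suppose moreover that every nonzero element of Λ₁ has norm at least m > 0. Then K ≥ m·L / covol(Λ₀), where covol(Λ₀) denotes the covolume of the lattice Λ₀ (the area of a fundamental domain, equal to the area of the torus T₀). -/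
open scoped NNReal
open MeasureTheory
open scoped RealInnerProductSpace

section Helpers

local notation "E2" => EuclideanSpace ℝ (Fin 2)

lemma inner_two (u v : E2) : ⟪u, v⟫ = u 0 * v 0 + u 1 * v 1 := by
  simp [PiLp.inner_apply, RCLike.inner_apply, Fin.sum_univ_two, mul_comm]

lemma normsq_two (u : E2) : ‖u‖ ^ 2 = u 0 ^ 2 + u 1 ^ 2 := by
  rw [← real_inner_self_eq_norm_sq, inner_two]; ring

lemma covol_formula (Λ₀ : Submodule ℤ E2)
    [DiscreteTopology Λ₀] [IsZLattice ℝ Λ₀] (B : Module.Basis (Fin 2) ℤ Λ₀) :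
    ZLattice.covolume Λ₀ =
      |(B 1 : E2) 0 * (B 0 : E2) 1 - (B 0 : E2) 0 * (B 1 : E2) 1| := by
  classical
  let b₀ := (EuclideanSpace.basisFun (Fin 2) ℝ).toBasis
  rw [ZLattice.covolume_eq_det_mul_measureReal Λ₀ volume B b₀, measureReal_def]
  have h1 : (volume (ZSpan.fundamentalDomain b₀)).toReal = 1 := by
    rw [measure_congr (ZSpan.fundamentalDomain_ae_parallelepiped b₀ volume)]
    have : ⇑b₀ = ⇑(EuclideanSpace.basisFun (Fin 2) ℝ) := by
      simp [b₀]
    rw [this, (EuclideanSpace.basisFun (Fin 2) ℝ).volume_parallelepiped]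
    simp
  rw [h1, mul_one]
  rw [Module.Basis.det_apply, Matrix.det_fin_two]
  simp only [Module.Basis.toMatrix_apply, b₀, OrthonormalBasis.coe_toBasis_repr_apply,
    EuclideanSpace.basisFun_repr, Function.comp_apply]
  exact abs_sub_comm _ _

/-- distance to the line spanned by `u`, at the foot of the perpendicular. -/
lemma perp_dist (u v : E2) (hu : u ≠ 0) :
    ‖v - (⟪v, u⟫ / ‖u‖ ^ 2) • u‖ * ‖u‖ = |u 0 * v 1 - u 1 * v 0| := by
  have hn : 0 < ‖u‖ := norm_pos_iff.mpr hu
  have hS : u 0 ^ 2 + u 1 ^ 2 ≠ 0 := by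
    rw [← normsq_two]; positivity
  set s : ℝ := ⟪v, u⟫ / ‖u‖ ^ 2 with hs
  have hcoord : ∀ i, (v - s • u) i = v i - s * u i := by
    intro i; simp [PiLp.sub_apply, PiLp.smul_apply, smul_eq_mul]
  have hsq : (‖v - s • u‖ * ‖u‖) ^ 2 = (u 0 * v 1 - u 1 * v 0) ^ 2 := by
    rw [mul_pow, normsq_two (v - s • u), normsq_two u, hcoord 0, hcoord 1]
    have hs' : s * (u 0 ^ 2 + u 1 ^ 2) = v 0 * u 0 + v 1 * u 1 := by
      rw [hs, inner_two, normsq_two]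
      field_simp
    nlinarith [hs', sq_nonneg (u 0 * v 1 - u 1 * v 0)]
  calc ‖v - s • u‖ * ‖u‖ = Real.sqrt ((‖v - s • u‖ * ‖u‖) ^ 2) :=
        (Real.sqrt_sq (by positivity)).symm
    _ = Real.sqrt ((u 0 * v 1 - u 1 * v 0) ^ 2) := by rw [hsq]
    _ = |u 0 * v 1 - u 1 * v 0| := Real.sqrt_sq_eq_abs _

lemma periodic_min (h : ℝ → ℝ) (hc : Continuous h) (hp : ∀ t, h (t + 1) = h t) :
    ∃ t₀, ∀ t, h t₀ ≤ h t := by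
  obtain ⟨t₀, ht₀mem, hmin⟩ := isCompact_Icc.exists_isMinOn (Set.nonempty_Icc.mpr zero_le_one)
    (hc.continuousOn (s := Set.Icc (0:ℝ) 1))
  refine ⟨t₀, fun t => ?_⟩
  have hper : Function.Periodic h 1 := hp
  have h1 : h t = h (Int.fract t) := by
    have := hper.sub_int_mul_eq (x := t) ⌊t⌋
    rw [mul_one] at this
    rw [Int.fract]
    exact this.symm
  rw [h1]
  exact isMinOn_iff.mp hmin _ ⟨Int.fract_nonneg t, (Int.fract_lt_one t).le⟩

end Helpers

/-- **Lipschitz maps between flat 2-tori.**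
Let `Λ₀` and `Λ₁` be `ℤ`-lattices in the Euclidean plane, let `f` be a `K`-Lipschitz map
of the plane that is equivariant with respect to a homomorphism `φ : Λ₀ →+ Λ₁` (so that it
descends to a `K`-Lipschitz map of the corresponding flat tori).  If the kernel of `φ` is the
infinite cyclic group generated by a nonzero `a ∈ Λ₀` and every nonzero element of `Λ₁` has
norm at least `m > 0`, then `K ≥ m * ‖a‖ / covol Λ₀`. -/
theorem lipschitz_torus
    (Λ₀ Λ₁ : Submodule ℤ (EuclideanSpace ℝ (Fin 2)))
    [DiscreteTopology Λ₀] [IsZLattice ℝ Λ₀]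
    [DiscreteTopology Λ₁] [IsZLattice ℝ Λ₁]
    (K : ℝ≥0) (f : EuclideanSpace ℝ (Fin 2) → EuclideanSpace ℝ (Fin 2))
    (hf : LipschitzWith K f)
    (φ : Λ₀ →+ Λ₁)
    (hequiv : ∀ (x : EuclideanSpace ℝ (Fin 2)) (l : Λ₀), f (x + l) = f x + (φ l : EuclideanSpace ℝ (Fin 2)))
    (a : Λ₀) (ha : a ≠ 0)
    (hker : ∀ l : Λ₀, φ l = 0 ↔ ∃ n : ℤ, l = n • a)
    (m : ℝ) (hm : 0 < m)
    (hmin : ∀ y : Λ₁, y ≠ 0 → m ≤ ‖(y : EuclideanSpace ℝ (Fin 2))‖) :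
    m * ‖(a : EuclideanSpace ℝ (Fin 2))‖ / ZLattice.covolume Λ₀ ≤ (K : ℝ) := by
  classical
  haveI : Module.IsTorsionFree ℤ (EuclideanSpace ℝ (Fin 2)) :=
    Equiv.moduleIsTorsionFree ℤ (WithLp.equiv 2 ((i : Fin 2) → (fun _ => ℝ) i))
  haveI := ZLattice.module_free ℝ Λ₀
  haveI := ZLattice.module_finite ℝ Λ₀
  have h2 : Module.finrank ℤ Λ₀ = 2 := by
    rw [ZLattice.rank ℝ Λ₀, finrank_euclideanSpace_fin]
  let B : Module.Basis (Fin 2) ℤ Λ₀ := (Module.finBasis ℤ Λ₀).reindex (finCongr h2)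
  have hcovol := covol_formula Λ₀ B
  have hcpos : 0 < ZLattice.covolume Λ₀ := ZLattice.covolume_pos Λ₀ volume
  set covol := ZLattice.covolume Λ₀ with hcv
  set A : EuclideanSpace ℝ (Fin 2) := (a : EuclideanSpace ℝ (Fin 2)) with hA
  have hA0 : A ≠ 0 := by
    simpa [hA] using fun h => ha (Subtype.ext h)
  have hL : 0 < ‖A‖ := norm_pos_iff.mpr hA0
  -- coordinates of `a` in the basis
  set p : ℤ := B.repr a 0 with hp
  set q : ℤ := B.repr a 1 with hq
  have harep : (p • B 0 + q • B 1 : Λ₀) = a := by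
    have := B.sum_repr a
    rwa [Fin.sum_univ_two] at this
  -- `φ a = 0`
  have hφa : φ a = 0 := (hker a).mpr ⟨1, (one_smul _ _).symm⟩
  -- a is primitive : gcd p q = 1
  have hgcd : Int.gcd p q = 1 := by
    set g : ℕ := Int.gcd p q with hg
    have hgne : g ≠ 0 := by
      intro h0
      have hpq := Int.gcd_eq_zero_iff.mp (hg ▸ h0)
      have hp0 : p = 0 := hpq.1
      have hq0 : q = 0 := hpq.2
      apply ha
      rw [← harep, hp0, hq0]; simp
    set c : Λ₀ := (p / (g : ℤ)) • B 0 + (q / (g : ℤ)) • B 1 with hc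
    have hgc : (g : ℤ) • c = a := by
      rw [hc, smul_add, smul_smul, smul_smul,
        Int.mul_ediv_cancel' (Int.gcd_dvd_left p q), Int.mul_ediv_cancel' (Int.gcd_dvd_right p q)]
      exact harep
    have hφc : φ c = 0 := by
      have h1 : (g : ℤ) • φ c = 0 := by
        rw [← map_zsmul, hgc, hφa]
      have h2' : ((g : ℤ) • (φ c : EuclideanSpace ℝ (Fin 2))) = 0 := by
        rw [← Submodule.coe_smul]
        exact congrArg _ h1
      rcases smul_eq_zero.mp h2' with h | h
      · exact absurd (by exact_mod_cast h) hgne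
      · exact Subtype.ext h
    obtain ⟨n, hn⟩ := (hker c).mp hφc
    have hga : (g : ℤ) • (n • a) = a := by rw [← hn]; exact hgc
    have h1 : ((1 : ℤ) - (g : ℤ) * n) • a = 0 := by
      rw [sub_smul, one_smul, mul_smul, hga, sub_self]
    have hcE : ((1 : ℤ) - (g : ℤ) * n) • (a : EuclideanSpace ℝ (Fin 2)) = 0 := by
      rw [← Submodule.coe_smul]; exact congrArg _ h1
    rcases smul_eq_zero.mp hcE with h | h
    · have hgn : (g : ℤ) * n = 1 := by omega
      have := Int.eq_one_of_mul_eq_one_right (by positivity) hgn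
      exact_mod_cast this
    · exact absurd (Subtype.ext h) ha
  -- Bezout coefficients
  set x : ℤ := Int.gcdA p q with hx
  set y : ℤ := Int.gcdB p q with hy
  have hbez : p * x + q * y = 1 := by
    have := Int.gcd_eq_gcd_ab p q
    rw [hgcd] at this
    exact_mod_cast this.symm
  -- the auxiliary lattice vector b'
  set b' : Λ₀ := y • B 0 - x • B 1 with hb'
  set Bv : EuclideanSpace ℝ (Fin 2) := (b' : EuclideanSpace ℝ (Fin 2)) with hBv
  -- coordinates
  set u0 : ℝ := (B 0 : EuclideanSpace ℝ (Fin 2)) 0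
  set u1 : ℝ := (B 0 : EuclideanSpace ℝ (Fin 2)) 1
  set v0 : ℝ := (B 1 : EuclideanSpace ℝ (Fin 2)) 0
  set v1 : ℝ := (B 1 : EuclideanSpace ℝ (Fin 2)) 1
  have hAc : ∀ i, A i = (p : ℝ) * (B 0 : EuclideanSpace ℝ (Fin 2)) i
      + (q : ℝ) * (B 1 : EuclideanSpace ℝ (Fin 2)) i := by
    intro i
    have h1 : A = ((p • B 0 + q • B 1 : Λ₀) : EuclideanSpace ℝ (Fin 2)) := by
      rw [harep]
    have := congrArg (fun z : EuclideanSpace ℝ (Fin 2) => z i) h1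
    simpa [PiLp.add_apply, PiLp.smul_apply, zsmul_eq_mul] using this
  have hBc : ∀ i, Bv i = (y : ℝ) * (B 0 : EuclideanSpace ℝ (Fin 2)) i
      - (x : ℝ) * (B 1 : EuclideanSpace ℝ (Fin 2)) i := by
    intro i
    have := congrArg (fun z : EuclideanSpace ℝ (Fin 2) => z i)
      (show Bv = ((y • B 0 - x • B 1 : Λ₀) : EuclideanSpace ℝ (Fin 2)) from rfl)
    simpa [PiLp.sub_apply, PiLp.smul_apply, zsmul_eq_mul] using this
  -- the determinant identity
  have hdet : |A 0 * Bv 1 - A 1 * Bv 0| = covol := by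
    rw [hAc 0, hAc 1, hBc 0, hBc 1, hcovol]
    have : ((p:ℝ) * u0 + (q:ℝ) * v0) * ((y:ℝ) * u1 - (x:ℝ) * v1)
        - ((p:ℝ) * u1 + (q:ℝ) * v1) * ((y:ℝ) * u0 - (x:ℝ) * v0)
        = -(((p:ℝ) * x + (q:ℝ) * y) * (u0 * v1 - u1 * v0)) := by ring
    rw [this]
    have hbr : ((p:ℝ) * x + (q:ℝ) * y) = 1 := by exact_mod_cast hbez
    rw [hbr, one_mul, abs_neg, abs_sub_comm, mul_comm u1 v0]
  -- φ b' ≠ 0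
  have hφb : φ b' ≠ 0 := by
    intro h0
    obtain ⟨n, hn⟩ := (hker b').mp h0
    have hBvA : ∀ i, Bv i = (n : ℝ) * A i := by
      intro i
      have := congrArg (fun z : EuclideanSpace ℝ (Fin 2) => z i)
        (show Bv = ((n • a : Λ₀) : EuclideanSpace ℝ (Fin 2)) from by rw [hBv, hn])
      simpa [PiLp.smul_apply, zsmul_eq_mul] using this
    have : |A 0 * Bv 1 - A 1 * Bv 0| = 0 := by
      rw [hBvA 0, hBvA 1]
      have : A 0 * ((n:ℝ) * A 1) - A 1 * ((n:ℝ) * A 0) = 0 := by ring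
      rw [this, abs_zero]
    rw [hdet] at this
    exact absurd this (ne_of_gt hcpos)
  set w : EuclideanSpace ℝ (Fin 2) := (φ b' : EuclideanSpace ℝ (Fin 2)) with hw
  have hmw : m ≤ ‖w‖ := hmin _ hφb
  have hwpos : 0 < ‖w‖ := lt_of_lt_of_le hm hmw
  -- the periodic function h
  set h : ℝ → ℝ := fun t => ⟪f (t • A), w⟫ with hh
  have hhcont : Continuous h := by
    apply Continuous.inner
    · exact hf.continuous.comp (continuous_id.smul continuous_const)
    · exact continuous_const
  have hhper : ∀ t, h (t + 1) = h t := by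
    intro t
    have h1 : (t + 1) • A = t • A + (a : EuclideanSpace ℝ (Fin 2)) := by
      rw [add_smul, one_smul, hA]
    have h2' : f (t • A + (a : EuclideanSpace ℝ (Fin 2))) = f (t • A) := by
      rw [hequiv (t • A) a, hφa]
      simp
    simp only [hh, h1, h2']
  obtain ⟨t₀, ht₀⟩ := periodic_min h hhcont hhper
  -- the two points
  set s : ℝ := ⟪Bv, A⟫ / ‖A‖ ^ 2 with hs
  set t' : ℝ := t₀ - s with ht'
  have hperp : ‖Bv - s • A‖ * ‖A‖ = covol := by
    rw [perp_dist A Bv hA0, hdet]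
  have hfy : f (t' • A + Bv) = f (t' • A) + w := hequiv (t' • A) b'
  -- the key estimate
  have hdist : ‖f (t' • A + Bv) - f (t₀ • A)‖ ≤ (K : ℝ) * (covol / ‖A‖) := by
    have h1 := hf.dist_le_mul (t' • A + Bv) (t₀ • A)
    rw [dist_eq_norm, dist_eq_norm] at h1
    have h2' : (t' • A + Bv) - t₀ • A = Bv - s • A := by
      rw [ht']
      rw [sub_smul]
      module
    rw [h2'] at h1
    have h3 : ‖Bv - s • A‖ = covol / ‖A‖ := by
      rw [eq_div_iff (ne_of_gt hL)]
      exact hperp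
    rw [h3] at h1
    exact h1
  have hwsq : ‖w‖ ^ 2 ≤ (K : ℝ) * (covol / ‖A‖) * ‖w‖ := by
    have e1 : ‖w‖ ^ 2 = ⟪f (t' • A + Bv) - f (t₀ • A), w⟫ + (h t₀ - h t') := by
      rw [hfy]
      have : f (t' • A) + w - f (t₀ • A) = w + (f (t' • A) - f (t₀ • A)) := by abel
      rw [this, inner_add_left, real_inner_self_eq_norm_sq, inner_sub_left]
      simp only [hh]
      ring
    have e2 : h t₀ - h t' ≤ 0 := sub_nonpos.mpr (ht₀ t')
    have e3 : ⟪f (t' • A + Bv) - f (t₀ • A), w⟫ ≤ ‖f (t' • A + Bv) - f (t₀ • A)‖ * ‖w‖ :=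
      real_inner_le_norm _ _
    calc ‖w‖ ^ 2 = ⟪f (t' • A + Bv) - f (t₀ • A), w⟫ + (h t₀ - h t') := e1
      _ ≤ ‖f (t' • A + Bv) - f (t₀ • A)‖ * ‖w‖ + 0 := add_le_add e3 e2
      _ = ‖f (t' • A + Bv) - f (t₀ • A)‖ * ‖w‖ := add_zero _
      _ ≤ (K : ℝ) * (covol / ‖A‖) * ‖w‖ :=
          mul_le_mul_of_nonneg_right hdist (norm_nonneg _)
    -- done
  have hwle : ‖w‖ ≤ (K : ℝ) * (covol / ‖A‖) := by
    rw [pow_two] at hwsq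
    exact le_of_mul_le_mul_right hwsq hwpos
  have hmle : m ≤ (K : ℝ) * (covol / ‖A‖) := le_trans hmw hwle
  rw [div_le_iff₀ hcpos]
  calc m * ‖A‖ ≤ ((K : ℝ) * (covol / ‖A‖)) * ‖A‖ :=
        mul_le_mul_of_nonneg_right hmle (norm_nonneg _)
    _ = (K : ℝ) * covol := by
        rw [mul_assoc, div_mul_cancel₀ _ (ne_of_gt hL)]
end

section
/- Let E and F be real normed vector spaces, let Λ₀ ⊆ E and Λ₁ ⊆ F be additive subgroups, let f̃ : E → F be a map, and let φ : Λ₀ → Λ₁ be an additive homomorphism such that f̃(x + λ) = f̃(x) + φ(λ) for all x ∈ E and λ ∈ Λ₀. Suppose every nonzero element of Λ₁ has norm at least m > 0, and let b ∈ Λ₀ satisfy φ(b) ≠ 0. Then for every nonempty subset A ⊆ E whose image f̃(A) is bounded, and every n ∈ ℕ, the infimal distance between the sets f̃(A) and f̃((n·b) + A) is at least n·m − 2·diam(f̃(A)). -/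
open scoped Pointwise

/-- The infimal distance between two subsets of a pseudometric space:
`inf {dist x y | x ∈ A, y ∈ B}`. -/
noncomputable def setInfDist {X : Type*} [PseudoMetricSpace X] (A B : Set X) : ℝ :=
  sInf {r : ℝ | ∃ x ∈ A, ∃ y ∈ B, r = dist x y}

/-- **Equivariant maps push translates far apart.**
Let `f : E → F` be equivariant with respect to a homomorphism `φ : Λ₀ →+ Λ₁` between additive
subgroups of real normed vector spaces.  Suppose every nonzero element of `Λ₁` has norm at
least `m > 0`, and `b ∈ Λ₀` satisfies `φ b ≠ 0`.  Then for every nonempty `A ⊆ E` with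
`f '' A` bounded and every `n ∈ ℕ`, the infimal distance between `f '' A` and
`f '' (n·b + A)` is at least `n·m − 2·diam (f '' A)`. -/
theorem setInfDist_image_translate_ge
    {E F : Type*} [NormedAddCommGroup E] [NormedSpace ℝ E]
    [NormedAddCommGroup F] [NormedSpace ℝ F]
    (Λ₀ : AddSubgroup E) (Λ₁ : AddSubgroup F)
    (f : E → F) (φ : Λ₀ →+ Λ₁)
    (hequiv : ∀ (x : E) (l : Λ₀), f (x + l) = f x + (φ l : F))
    (m : ℝ) (hm : 0 < m)
    (hmin : ∀ y : Λ₁, y ≠ 0 → m ≤ ‖(y : F)‖)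
    (b : Λ₀) (hb : φ b ≠ 0)
    (A : Set E) (hA : A.Nonempty)
    (hbd : Bornology.IsBounded (f '' A))
    (n : ℕ) :
    (n : ℝ) * m - 2 * Metric.diam (f '' A)
      ≤ setInfDist (f '' A) (f '' ((n • (b : E)) +ᵥ A)) := by
  obtain ⟨a₀, ha₀⟩ := hA
  have hdiam : 0 ≤ Metric.diam (f '' A) := Metric.diam_nonneg
  apply le_csInf
  · exact ⟨dist (f a₀) (f ((n • (b : E)) + a₀)), f a₀, ⟨a₀, ha₀, rfl⟩,
      f ((n • (b : E)) + a₀), ⟨(n • (b : E)) + a₀, ⟨a₀, ha₀, rfl⟩, rfl⟩, rfl⟩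
  · rintro r ⟨x, ⟨a₁, ha₁, rfl⟩, y, ⟨z, ⟨a₂, ha₂, rfl⟩, rfl⟩, rfl⟩
    have hz : f ((n • (b : E)) +ᵥ a₂) = f a₂ + (n : ℝ) • ((φ b : F)) := by
      have h : (n • (b : E)) +ᵥ a₂ = a₂ + ((n • b : Λ₀) : E) := by
        simp [add_comm]
      rw [h, hequiv]
      simp
      module
    rw [hz]
    have h1 : (n : ℝ) * m ≤ ‖(n : ℝ) • (φ b : F)‖ := by
      rw [norm_smul, Real.norm_natCast]
      exact mul_le_mul_of_nonneg_left (hmin _ hb) (Nat.cast_nonneg n)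
    have h2 : dist (f a₁) (f a₂) ≤ Metric.diam (f '' A) :=
      Metric.dist_le_diam_of_mem hbd ⟨a₁, ha₁, rfl⟩ ⟨a₂, ha₂, rfl⟩
    have key : ‖(n : ℝ) • (φ b : F)‖ - dist (f a₁) (f a₂)
        ≤ dist (f a₁) (f a₂ + (n : ℝ) • (φ b : F)) := by
      rw [dist_eq_norm, dist_eq_norm]
      have h3 : ‖(n : ℝ) • (φ b : F)‖ - ‖f a₁ - f a₂‖
          ≤ ‖(n : ℝ) • (φ b : F) - (f a₁ - f a₂)‖ := norm_sub_norm_le _ _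
      have h4 : (n : ℝ) • (φ b : F) - (f a₁ - f a₂)
          = -(f a₁ - (f a₂ + (n : ℝ) • (φ b : F))) := by abel
      rw [h4, norm_neg] at h3
      exact h3
    linarith
end
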